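/- Let c > 0 and let (λ_n)_{n≥1} be a sequence of nonnegative real numbers such that λ_n/n → c as n → ∞. Then t · Σ_{n=1}^∞ e^{−λ_n t} converges to 1/c as t → 0⁺. In particular, if λ_n/n → 4π/A for a bounded planar domain of area A (as given by Weyl's law), the heat trace satisfies Σ_{n=1}^∞ e^{−λ_n t} ~ A/(4πt) as t → 0. -/

import Mathlib

open Filter Real Topology

set_option maxHeartbeats 1000000

private lemma exp_div_tendsto (a : ℝ) (ha : 0 < a) :
    Filter.Tendsto (fun t : ℝ => t * (Real.exp (-(a * t)) / (1 - Real.exp (-(a * t)))))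
      (nhdsWithin 0 (Set.Ioi 0)) (nhds (1 / a)) := by
  have hslope : Filter.Tendsto (fun x : ℝ => x⁻¹ * (Real.exp x - 1))
      (nhdsWithin 0 {0}ᶜ) (nhds 1) := by
    have h := Real.hasDerivAt_exp 0
    rw [hasDerivAt_iff_tendsto_slope] at h
    simpa [slope_fun_def, Real.exp_zero] using h
  have hmap : Filter.Tendsto (fun t : ℝ => a * t) (nhdsWithin 0 (Set.Ioi 0))
      (nhdsWithin 0 {0}ᶜ) := by
    have h1 : Filter.Tendsto (fun t : ℝ => a * t) (nhdsWithin 0 (Set.Ioi 0)) (nhds 0) := by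
      simpa using ((continuous_mul_left a).tendsto (0 : ℝ)).mono_left
        (nhdsWithin_le_nhds (s := Set.Ioi (0 : ℝ)))
    refine tendsto_nhdsWithin_of_tendsto_nhds_of_eventually_within _ h1 ?_
    filter_upwards [self_mem_nhdsWithin] with t ht
    simpa using (mul_pos ha ht).ne'
  have h2 : Filter.Tendsto (fun t : ℝ => (a * t)⁻¹ * (Real.exp (a * t) - 1))
      (nhdsWithin 0 (Set.Ioi 0)) (nhds 1) := hslope.comp hmap
  have h3 : Filter.Tendsto (fun t : ℝ => (1 / a) * ((a * t)⁻¹ * (Real.exp (a * t) - 1))⁻¹)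
      (nhdsWithin 0 (Set.Ioi 0)) (nhds (1 / a)) := by
    have := (h2.inv₀ one_ne_zero).const_mul (1 / a)
    simpa using this
  apply h3.congr'
  filter_upwards [self_mem_nhdsWithin] with t ht
  have htpos : (0 : ℝ) < t := ht
  have hat : 0 < a * t := mul_pos ha htpos
  have h1e : (1 : ℝ) < Real.exp (a * t) := Real.one_lt_exp_iff.2 hat
  have hne : Real.exp (a * t) - 1 ≠ 0 := by linarith
  have hene : Real.exp (a * t) ≠ 0 := (Real.exp_pos _).ne'
  rw [Real.exp_neg]
  rw [eq_comm]
  field_simp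

private lemma tsum_exp_geom (a t : ℝ) (ha : 0 < a) (ht : 0 < t) :
    ∑' n : ℕ, Real.exp (-(a * (n + 1) * t)) =
      Real.exp (-(a * t)) / (1 - Real.exp (-(a * t))) := by
  set q := Real.exp (-(a * t)) with hq
  have hq0 : 0 ≤ q := (Real.exp_pos _).le
  have hq1 : q < 1 := Real.exp_lt_one_iff.2 (by nlinarith)
  have hterm : ∀ n : ℕ, Real.exp (-(a * (n + 1) * t)) = q ^ (n + 1) := by
    intro n
    rw [hq, ← Real.exp_nat_mul]
    congr 1
    push_cast
    ring
  calc ∑' n : ℕ, Real.exp (-(a * (n + 1) * t)) = ∑' n : ℕ, q * q ^ n := by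
        refine tsum_congr fun n => ?_
        rw [hterm n, pow_succ]; ring
    _ = q * (1 - q)⁻¹ := by rw [tsum_mul_left, tsum_geometric_of_lt_one hq0 hq1]
    _ = q / (1 - q) := (div_eq_mul_inv _ _).symm

theorem heat_trace_leading_term (c : ℝ) (hc : 0 < c) (lam : ℕ → ℝ)
    (hnonneg : ∀ n, 1 ≤ n → 0 ≤ lam n)
    (hweyl : Filter.Tendsto (fun n : ℕ => lam n / n) Filter.atTop (nhds c)) :
    Filter.Tendsto (fun t : ℝ => t * ∑' n : ℕ, Real.exp (-lam (n + 1) * t))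
      (nhdsWithin 0 (Set.Ioi 0)) (nhds (1 / c)) := by
  rw [Metric.tendsto_nhds]
  intro ε hε
  set ε₁ : ℝ := min (c / 2) (ε * c ^ 2 / 4) with hε₁def
  have hε₁pos : 0 < ε₁ := lt_min (by linarith) (by positivity)
  have hε₁c : ε₁ ≤ c / 2 := min_le_left _ _
  have hε₁ε : ε₁ ≤ ε * c ^ 2 / 4 := min_le_right _ _
  set a : ℝ := c - ε₁ with hadef
  set b : ℝ := c + ε₁ with hbdef
  have hapos : 0 < a := by rw [hadef]; linarith
  have hbpos : 0 < b := by rw [hbdef]; linarith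
  have hac : c / 2 ≤ a := by rw [hadef]; linarith
  have hub : 1 / a < 1 / c + ε := by
    have h1 : 1 / a - 1 / c = ε₁ / (c * a) := by
      rw [div_sub_div 1 1 hapos.ne' hc.ne', one_mul, mul_one, hadef]; ring
    have h2 : ε₁ / (c * a) < ε := by
      rw [div_lt_iff₀ (by positivity)]
      have h3 := mul_le_mul_of_nonneg_left hac (le_of_lt (mul_pos hε hc))
      nlinarith
    linarith
  have hlb : 1 / c - ε < 1 / b := by
    have hcb : c ≤ b := by rw [hbdef]; linarith
    have h1 : 1 / c - 1 / b = ε₁ / (c * b) := by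
      rw [div_sub_div 1 1 hc.ne' hbpos.ne', one_mul, mul_one, hbdef]; ring
    have h2 : ε₁ / (c * b) < ε := by
      rw [div_lt_iff₀ (by positivity)]
      have h3 := mul_le_mul_of_nonneg_left hcb (le_of_lt (mul_pos hε hc))
      nlinarith
    linarith
  -- get N
  have hev : ∀ᶠ n : ℕ in Filter.atTop, |lam n / n - c| < ε₁ :=
    (Metric.tendsto_nhds.1 hweyl ε₁ hε₁pos).mono fun n h => by rwa [Real.dist_eq] at h
  obtain ⟨N₀, hN₀⟩ := Filter.eventually_atTop.1 hev
  set N : ℕ := max N₀ 1 with hNdef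
  have hN1 : 1 ≤ N := le_max_right _ _
  have hbound : ∀ n : ℕ, N ≤ n → a * n ≤ lam n ∧ lam n ≤ b * n := by
    intro n hn
    have hn1 : 1 ≤ n := le_trans hN1 hn
    have hnpos : (0 : ℝ) < n := by exact_mod_cast hn1
    have h := hN₀ n (le_trans (le_max_left _ _) hn)
    rw [abs_sub_lt_iff] at h
    obtain ⟨hA, hB⟩ := h
    constructor
    · have h4 : a < lam n / n := by rw [hadef]; linarith
      calc a * n ≤ lam n / n * n := by nlinarith
        _ = lam n := by field_simp
    · have h4 : lam n / n < b := by rw [hbdef]; linarith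
      calc lam n = lam n / n * n := by field_simp
        _ ≤ b * n := by nlinarith
  -- key pointwise bounds
  have key : ∀ t : ℝ, 0 < t →
      Real.exp (-(b * N * t)) * (t * (Real.exp (-(b * t)) / (1 - Real.exp (-(b * t))))) ≤
        t * ∑' n : ℕ, Real.exp (-lam (n + 1) * t) ∧
      t * ∑' n : ℕ, Real.exp (-lam (n + 1) * t) ≤
        t * N + t * (Real.exp (-(a * t)) / (1 - Real.exp (-(a * t)))) := by
    intro t ht
    set q := Real.exp (-(a * t)) with hqdef
    set r := Real.exp (-(b * t)) with hrdef
    have hat : 0 < a * t := mul_pos hapos ht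
    have hbt : 0 < b * t := mul_pos hbpos ht
    have hq0 : 0 ≤ q := (Real.exp_pos _).le
    have hq1 : q < 1 := Real.exp_lt_one_iff.2 (by linarith)
    have hr0 : 0 ≤ r := (Real.exp_pos _).le
    have hr1 : r < 1 := Real.exp_lt_one_iff.2 (by linarith)
    -- geometric comparisons
    have hgeoma : Summable (fun n : ℕ => Real.exp (-(a * (n + 1) * t))) := by
      have : ∀ n : ℕ, Real.exp (-(a * (n + 1) * t)) = q * q ^ n := by
        intro n
        rw [hqdef, ← Real.exp_nat_mul, ← Real.exp_add]
        congr 1; push_cast; ring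
      simpa only [this] using (summable_geometric_of_lt_one hq0 hq1).mul_left q
    have hgeomb : Summable (fun n : ℕ => Real.exp (-(b * (n + ↑N + 1) * t))) := by
      have : ∀ n : ℕ, Real.exp (-(b * (n + ↑N + 1) * t)) =
          (Real.exp (-(b * ↑N * t)) * r) * r ^ n := by
        intro n
        rw [hrdef, ← Real.exp_nat_mul, ← Real.exp_add, ← Real.exp_add]
        congr 1; push_cast; ring
      simpa only [this] using
        (summable_geometric_of_lt_one hr0 hr1).mul_left (Real.exp (-(b * ↑N * t)) * r)
    -- upper comparison of shifted terms
    have hup : ∀ n : ℕ, Real.exp (-lam (n + N + 1) * t) ≤ Real.exp (-(a * (n + 1) * t)) := by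
      intro n
      apply Real.exp_le_exp.2
      have hb := (hbound (n + N + 1) (by omega)).1
      push_cast at hb
      have hN0 : (0 : ℝ) ≤ (N : ℝ) := Nat.cast_nonneg N
      have hn0 : (0 : ℝ) ≤ (n : ℝ) := Nat.cast_nonneg n
      have h1 : a * ((n : ℝ) + 1) ≤ a * ((n : ℝ) + (N : ℝ) + 1) := by nlinarith
      have h2 : a * ((n : ℝ) + (N : ℝ) + 1) ≤ lam (n + N + 1) := hb
      nlinarith [mul_le_mul_of_nonneg_right (le_trans h1 h2) ht.le]
    have hlo : ∀ n : ℕ, Real.exp (-(b * (n + ↑N + 1) * t)) ≤ Real.exp (-lam (n + N + 1) * t) := by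
      intro n
      apply Real.exp_le_exp.2
      have hb := (hbound (n + N + 1) (by omega)).2
      push_cast at hb
      nlinarith [mul_le_mul_of_nonneg_right hb ht.le]
    -- summability of the shifted series and the full series
    have hsum_shift : Summable (fun n : ℕ => Real.exp (-lam (n + N + 1) * t)) :=
      Summable.of_nonneg_of_le (fun n => (Real.exp_pos _).le) hup hgeoma
    have hsum : Summable (fun n : ℕ => Real.exp (-lam (n + 1) * t)) :=
      (summable_nat_add_iff N).1 hsum_shift
    have hsplit := (Summable.sum_add_tsum_nat_add N hsum).symm
    -- finite part bounds
    have hfin_le : ∑ i ∈ Finset.range N, Real.exp (-lam (i + 1) * t) ≤ (N : ℝ) := by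
      calc ∑ i ∈ Finset.range N, Real.exp (-lam (i + 1) * t)
          ≤ ∑ _i ∈ Finset.range N, (1 : ℝ) := by
            refine Finset.sum_le_sum fun i _ => ?_
            rw [Real.exp_le_one_iff]
            have := hnonneg (i + 1) (by omega)
            nlinarith
        _ = (N : ℝ) := by simp
    have hfin_ge : 0 ≤ ∑ i ∈ Finset.range N, Real.exp (-lam (i + 1) * t) :=
      Finset.sum_nonneg fun i _ => (Real.exp_pos _).le
    -- tail bounds
    have htail_u : (∑' n : ℕ, Real.exp (-lam (n + N + 1) * t)) ≤ q / (1 - q) := by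
      calc (∑' n : ℕ, Real.exp (-lam (n + N + 1) * t))
          ≤ ∑' n : ℕ, Real.exp (-(a * (n + 1) * t)) := Summable.tsum_le_tsum hup hsum_shift hgeoma
        _ = q / (1 - q) := tsum_exp_geom a t hapos ht
    have htail_l : Real.exp (-(b * ↑N * t)) * (r / (1 - r)) ≤
        ∑' n : ℕ, Real.exp (-lam (n + N + 1) * t) := by
      have heq : (∑' n : ℕ, Real.exp (-(b * (n + ↑N + 1) * t))) =
          Real.exp (-(b * ↑N * t)) * (r / (1 - r)) := by
        have hterm : ∀ n : ℕ, Real.exp (-(b * (n + ↑N + 1) * t)) =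
            Real.exp (-(b * ↑N * t)) * Real.exp (-(b * (n + 1) * t)) := by
          intro n
          rw [← Real.exp_add]
          congr 1; ring
        calc (∑' n : ℕ, Real.exp (-(b * (n + ↑N + 1) * t)))
            = ∑' n : ℕ, Real.exp (-(b * ↑N * t)) * Real.exp (-(b * (n + 1) * t)) :=
              tsum_congr hterm
          _ = Real.exp (-(b * ↑N * t)) * ∑' n : ℕ, Real.exp (-(b * (n + 1) * t)) :=
              tsum_mul_left
          _ = Real.exp (-(b * ↑N * t)) * (r / (1 - r)) := by
              rw [tsum_exp_geom b t hbpos ht]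
      rw [← heq]
      exact Summable.tsum_le_tsum hlo hgeomb hsum_shift
    -- combine
    have hS_le : (∑' n : ℕ, Real.exp (-lam (n + 1) * t)) ≤ (N : ℝ) + q / (1 - q) := by
      rw [hsplit]; exact add_le_add hfin_le htail_u
    have hS_ge : Real.exp (-(b * ↑N * t)) * (r / (1 - r)) ≤
        ∑' n : ℕ, Real.exp (-lam (n + 1) * t) := by
      rw [hsplit]
      calc Real.exp (-(b * ↑N * t)) * (r / (1 - r))
          ≤ ∑' n : ℕ, Real.exp (-lam (n + N + 1) * t) := htail_l
        _ ≤ _ := le_add_of_nonneg_left hfin_ge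
    constructor
    · calc Real.exp (-(b * ↑N * t)) * (t * (r / (1 - r)))
          = t * (Real.exp (-(b * ↑N * t)) * (r / (1 - r))) := by ring
        _ ≤ t * ∑' n : ℕ, Real.exp (-lam (n + 1) * t) :=
            mul_le_mul_of_nonneg_left hS_ge ht.le
    · calc t * ∑' n : ℕ, Real.exp (-lam (n + 1) * t)
          ≤ t * ((N : ℝ) + q / (1 - q)) := mul_le_mul_of_nonneg_left hS_le ht.le
        _ = t * (N : ℝ) + t * (q / (1 - q)) := by ring
  -- limits of bounds
  have hU : Filter.Tendsto
      (fun t : ℝ => t * N + t * (Real.exp (-(a * t)) / (1 - Real.exp (-(a * t)))))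
      (nhdsWithin 0 (Set.Ioi 0)) (nhds (1 / a)) := by
    have h1 : Filter.Tendsto (fun t : ℝ => t * (N : ℝ)) (nhdsWithin 0 (Set.Ioi 0))
        (nhds 0) := by
      simpa using ((continuous_mul_right (N : ℝ)).tendsto (0 : ℝ)).mono_left
        (nhdsWithin_le_nhds (s := Set.Ioi (0 : ℝ)))
    simpa using h1.add (exp_div_tendsto a hapos)
  have hL : Filter.Tendsto
      (fun t : ℝ => Real.exp (-(b * N * t)) *
        (t * (Real.exp (-(b * t)) / (1 - Real.exp (-(b * t))))))
      (nhdsWithin 0 (Set.Ioi 0)) (nhds (1 / b)) := by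
    have hcont : Continuous fun t : ℝ => Real.exp (-(b * ↑N * t)) :=
      Real.continuous_exp.comp ((continuous_const.mul continuous_id).neg)
    have h1 : Filter.Tendsto (fun t : ℝ => Real.exp (-(b * ↑N * t)))
        (nhdsWithin 0 (Set.Ioi 0)) (nhds 1) := by
      simpa using (hcont.tendsto (0 : ℝ)).mono_left
        (nhdsWithin_le_nhds (s := Set.Ioi (0 : ℝ)))
    simpa using h1.mul (exp_div_tendsto b hbpos)
  have hUev := hU.eventually (gt_mem_nhds hub)
  have hLev := hL.eventually (lt_mem_nhds hlb)
  filter_upwards [hUev, hLev, self_mem_nhdsWithin] with t h1 h2 ht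
  have hk := key t ht
  rw [Real.dist_eq, abs_sub_lt_iff]
  exact ⟨by linarith [hk.2], by linarith [hk.1]⟩
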